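/- Let p and q be coprime integers with p > q > 1 and p > 2q−1. Then the topological closure in ℝ of the span-set Span = {span(n) : n ∈ ℕ} has Lebesgue measure zero. -/

import Mathlib

/-- `w` labels a branch of the base-p/q automaton with digit set `E` from state `n`:
there are states `s 0 = n, s 1, s 2, …` with `q·s(k+1) = p·s k + w k` and `w k ∈ E`. -/
def IsBranch (p q : ℕ) (E : Set ℤ) (n : ℕ) (w : ℕ → ℤ) : Prop :=
  ∃ s : ℕ → ℕ, s 0 = n ∧ ∀ k : ℕ, (q : ℤ) * s (k + 1) = p * s k + w k ∧ w k ∈ E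

/-- `u` (a word of length `ℓ`) labels a path from `n` to `m` in the base-p/q automaton
with digit set `E`. -/
def IsPath (p q : ℕ) (E : Set ℤ) (n m ℓ : ℕ) (u : ℕ → ℤ) : Prop :=
  ∃ s : ℕ → ℕ, s 0 = n ∧ s ℓ = m ∧
    ∀ k < ℓ, (q : ℤ) * s (k + 1) = p * s k + u k ∧ u k ∈ E

/-- The canonical digit alphabet `A_p = {0, 1, …, p−1}`. -/
def Ap (p : ℕ) : Set ℤ := Set.Icc 0 ((p : ℤ) - 1)

/-- The lower alphabet `{0, 1, …, q−1}`. -/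
def LowAlph (q : ℕ) : Set ℤ := Set.Icc 0 ((q : ℤ) - 1)

/-- The upper alphabet `{p−q, …, p−1}`. -/
def UpAlph (p q : ℕ) : Set ℤ := Set.Icc ((p : ℤ) - q) ((p : ℤ) - 1)

/-- The alphabet `D = {p−2q+1, …, p−1}` of the automaton `S_{p/q}`. -/
def Dalph (p q : ℕ) : Set ℤ := Set.Icc ((p : ℤ) - 2 * q + 1) ((p : ℤ) - 1)

/-- Evaluation after the radix point: `ρ(w) = Σ_{i≥1} (w_i/q)·(q/p)^i`
(here `w k` is the `(k+1)`-st digit). -/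
noncomputable def rho (p q : ℕ) (w : ℕ → ℤ) : ℝ :=
  ∑' i : ℕ, ((w i : ℝ) / q) * ((q : ℝ) / p) ^ (i + 1)

namespace SpanAux

/-- minimal digit in `D` congruent to `-p·t` mod `q` -/
def dminZ (p q : ℕ) (t : ℤ) : ℤ :=
  ((p:ℤ) - 2*q + 1) + (-(p:ℤ)*t - ((p:ℤ) - 2*q + 1)) % q

def digZ (p q : ℕ) (t : ℤ) (b : Bool) : ℤ := dminZ p q t + (if b then (q:ℤ) else 0)

def nxtZ (p q : ℕ) (t : ℤ) (b : Bool) : ℤ := ((p:ℤ)*t + digZ p q t b) / q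

def TZ (p q : ℕ) (b : ℕ → Bool) : ℕ → ℤ
  | 0 => 0
  | i+1 => nxtZ p q (TZ p q b i) (b i)

def DgZ (p q : ℕ) (b : ℕ → Bool) (i : ℕ) : ℤ := digZ p q (TZ p q b i) (b i)

lemma dvd_dmin (p q : ℕ) (t : ℤ) : (q:ℤ) ∣ ((p:ℤ)*t + dminZ p q t) := by
  have h := Int.emod_def (-(p:ℤ)*t - ((p:ℤ) - 2*q + 1)) (q:ℤ)
  refine ⟨-((-(p:ℤ)*t - ((p:ℤ) - 2*q + 1)) / q), ?_⟩
  unfold dminZ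
  linarith [h]

lemma dvd_dig (p q : ℕ) (t : ℤ) (b : Bool) : (q:ℤ) ∣ ((p:ℤ)*t + digZ p q t b) := by
  unfold digZ
  rcases b with _ | _
  · simpa using dvd_dmin p q t
  · simp only [if_pos]
    have h1 := dvd_dmin p q t
    have h2 : (q:ℤ) ∣ ((p:ℤ)*t + dminZ p q t) + q := Dvd.dvd.add h1 ⟨1, by ring⟩
    convert h2 using 1; ring

lemma q_mul_nxt (p q : ℕ) (hq : 0 < q) (t : ℤ) (b : Bool) :
    (q:ℤ) * nxtZ p q t b = (p:ℤ)*t + digZ p q t b :=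
  Int.mul_ediv_cancel' (dvd_dig p q t b)

lemma dmin_lb (p q : ℕ) (hq : 0 < q) (t : ℤ) : (p:ℤ) - 2*q + 1 ≤ dminZ p q t := by
  have := Int.emod_nonneg (-(p:ℤ)*t - ((p:ℤ) - 2*q + 1)) (by exact_mod_cast hq.ne' : (q:ℤ) ≠ 0)
  unfold dminZ; linarith

lemma dmin_ub (p q : ℕ) (hq : 0 < q) (t : ℤ) : dminZ p q t ≤ (p:ℤ) - q := by
  have := Int.emod_lt_of_pos (-(p:ℤ)*t - ((p:ℤ) - 2*q + 1)) (by exact_mod_cast hq : (0:ℤ) < q)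
  unfold dminZ; linarith

lemma TZ_congr (p q : ℕ) (b b' : ℕ → Bool) (i : ℕ) (h : ∀ j < i, b j = b' j) :
    TZ p q b i = TZ p q b' i := by
  induction i with
  | zero => rfl
  | succ n ih =>
      have h1 : TZ p q b n = TZ p q b' n := ih (fun j hj => h j (Nat.lt_succ_of_lt hj))
      show nxtZ p q (TZ p q b n) (b n) = nxtZ p q (TZ p q b' n) (b' n)
      rw [h1, h n (Nat.lt_succ_self n)]

lemma DgZ_congr (p q : ℕ) (b b' : ℕ → Bool) (i : ℕ) (h : ∀ j ≤ i, b j = b' j) :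
    DgZ p q b i = DgZ p q b' i := by
  unfold DgZ
  rw [TZ_congr p q b b' i (fun j hj => h j hj.le), h i le_rfl]

/-- every branch from 0 over `Dalph` is encoded by a boolean sequence -/
lemma encode (p q : ℕ) (hq : 0 < q) (d t : ℕ → ℤ) (h0 : t 0 = 0)
    (hstep : ∀ k, (q:ℤ) * t (k+1) = (p:ℤ) * t k + d k ∧ d k ∈ Dalph p q) :
    ∃ b : ℕ → Bool, ∀ i, TZ p q b i = t i ∧ DgZ p q b i = d i := by
  classical
  refine ⟨fun i => decide (d i ≠ dminZ p q (t i)), ?_⟩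
  have key : ∀ i, TZ p q (fun i => decide (d i ≠ dminZ p q (t i))) i = t i := by
    intro i
    induction i with
    | zero => exact h0.symm
    | succ n ih =>
        obtain ⟨heq, hmem⟩ := hstep n
        obtain ⟨hlb, hub⟩ := hmem
        have hdvd1 := dvd_dmin p q (t n)
        have hdvd2 : (q:ℤ) ∣ ((p:ℤ) * t n + d n) := ⟨t (n+1), by linarith [heq]⟩
        obtain ⟨c, hc⟩ : (q:ℤ) ∣ (d n - dminZ p q (t n)) := by
          have := Int.dvd_sub hdvd2 hdvd1
          simpa using this
        have hql : (p:ℤ) - 2*q + 1 ≤ dminZ p q (t n) := dmin_lb p q hq (t n)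
        have hqu : dminZ p q (t n) ≤ (p:ℤ) - q := dmin_ub p q hq (t n)
        have hqZ : (0:ℤ) < q := by exact_mod_cast hq
        have hc0 : 0 ≤ c := by nlinarith
        have hc1 : c ≤ 1 := by nlinarith
        have hdig : d n = digZ p q (t n) (decide (d n ≠ dminZ p q (t n))) := by
          interval_cases c
          · have : d n = dminZ p q (t n) := by linarith
            simp [digZ, this]
          · have hne : d n ≠ dminZ p q (t n) := by intro h; rw [h] at hc; omega
            simp [digZ, hne]
            linarith
        show nxtZ p q _ _ = t (n+1)
        rw [ih]
        have h5 := q_mul_nxt p q hq (t n) (decide (d n ≠ dminZ p q (t n)))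
        have h2 : (q:ℤ) * nxtZ p q (t n) (decide (d n ≠ dminZ p q (t n))) = (q:ℤ) * t (n+1) := by
          rw [h5, ← hdig]; linarith
        exact mul_left_cancel₀ (by exact_mod_cast hq.ne' : (q:ℤ) ≠ 0) h2
  intro i
  refine ⟨key i, ?_⟩
  obtain ⟨heq, hmem⟩ := hstep i
  obtain ⟨hlb, hub⟩ := hmem
  have hdvd1 := dvd_dmin p q (t i)
  have hdvd2 : (q:ℤ) ∣ ((p:ℤ) * t i + d i) := ⟨t (i+1), by linarith [heq]⟩
  obtain ⟨c, hc⟩ : (q:ℤ) ∣ (d i - dminZ p q (t i)) := by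
    have := Int.dvd_sub hdvd2 hdvd1
    simpa using this
  have hql : (p:ℤ) - 2*q + 1 ≤ dminZ p q (t i) := dmin_lb p q hq (t i)
  have hqu : dminZ p q (t i) ≤ (p:ℤ) - q := dmin_ub p q hq (t i)
  have hqZ : (0:ℤ) < q := by exact_mod_cast hq
  have hc0 : 0 ≤ c := by nlinarith
  have hc1 : c ≤ 1 := by nlinarith
  have hdig : d i = digZ p q (t i) (decide (d i ≠ dminZ p q (t i))) := by
    interval_cases c
    · have : d i = dminZ p q (t i) := by linarith
      simp [digZ, this]
    · have hne : d i ≠ dminZ p q (t i) := by intro h; rw [h] at hc; omega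
      simp [digZ, hne]
      linarith
  unfold DgZ
  rw [key i, ← hdig]

lemma summable_term (q : ℕ) (r : ℝ) (h0 : 0 ≤ r) (h1 : r < 1) (w : ℕ → ℤ) (C : ℝ)
    (hC : ∀ i, |(w i : ℝ)| ≤ C) :
    Summable (fun i : ℕ => ((w i : ℝ)/q) * r^(i+1)) := by
  apply Summable.of_norm_bounded (g := fun i : ℕ => (C/q*r) * r^i)
    ((summable_geometric_of_lt_one h0 h1).mul_left _)
  intro i
  have h2 : ‖((w i : ℝ)/q) * r^(i+1)‖ = (|(w i : ℝ)|/q) * r^(i+1) := by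
    rw [norm_mul, Real.norm_eq_abs, Real.norm_eq_abs, abs_div, abs_pow,
      abs_of_nonneg h0, Nat.abs_cast]
  rw [h2]
  have h3 : (|(w i : ℝ)|/q) * r^(i+1) ≤ (C/q) * r^(i+1) := by
    gcongr
    exact hC i
  calc (|(w i : ℝ)|/q) * r^(i+1) ≤ (C/q) * r^(i+1) := h3
    _ = (C/q*r) * r^i := by ring

lemma tsum_tail (c r : ℝ) (h0 : 0 ≤ r) (h1 : r < 1) (k : ℕ) :
    ∑' i : ℕ, c * r^(i+k+1) = c * r^(k+1) * (1-r)⁻¹ := by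
  have h : ∀ i : ℕ, c * r^(i+k+1) = r^i * (c * r^(k+1)) := fun i => by ring
  rw [tsum_congr h, tsum_mul_right, tsum_geometric_of_lt_one h0 h1]; ring

lemma summable_tail (c r : ℝ) (h0 : 0 ≤ r) (h1 : r < 1) (k : ℕ) :
    Summable (fun i : ℕ => c * r^(i+k+1)) := by
  apply ((summable_geometric_of_lt_one h0 h1).mul_right (c * r^(k+1))).congr
  intro i; ring

end SpanAux

open SpanAux MeasureTheory Filter

set_option maxHeartbeats 1000000 in
theorem stmt1 (p q : ℕ) (hco : Nat.Coprime p q) (hq : 1 < q) (hpq : q < p)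
    (hbig : 2 * q - 1 < p)
    (mw mx : ℕ → ℕ → ℤ)
    (hmw : ∀ n, IsBranch p q (LowAlph q) n (mw n))
    (hmx : ∀ n, IsBranch p q (UpAlph p q) n (mx n)) :
    MeasureTheory.volume
      (closure {x : ℝ | ∃ n : ℕ, x = rho p q (mx n) - rho p q (mw n)}) = 0 := by
  classical
  have hq0 : 0 < q := by omega
  have hp2 : 2*q < p := by
    rcases lt_or_ge (2*q) p with h | h
    · exact h
    · exfalso
      have hd : q ∣ p := ⟨2, by omega⟩
      have := (Nat.coprime_comm.mp hco).eq_one_of_dvd hd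
      omega
  have hP : (0:ℝ) < p := by exact_mod_cast (by omega : 0 < p)
  have hQ : (0:ℝ) < q := by exact_mod_cast hq0
  set lam : ℝ := (q:ℝ)/p with hlam
  have hl0 : 0 ≤ lam := by positivity
  have hl1 : lam < 1 := by rw [hlam, div_lt_one hP]; exact_mod_cast hpq
  have h2l0 : (0:ℝ) ≤ 2*lam := by linarith
  have h2l1 : 2*lam < 1 := by
    have h : 2*lam = ((2*q : ℕ):ℝ)/p := by rw [hlam]; push_cast; ring
    rw [h, div_lt_one hP]; exact_mod_cast hp2
  set S : Set ℝ := {x : ℝ | ∃ n : ℕ, x = rho p q (mx n) - rho p q (mw n)} with hS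
  set lo : ℤ := (p:ℤ) - 2*q + 1 with hlo
  set hi : ℤ := (p:ℤ) - 1 with hhi
  -- per-n data
  have branch : ∀ n : ℕ, ∃ d : ℕ → ℤ,
      (rho p q (mx n) - rho p q (mw n) = ∑' i : ℕ, ((d i : ℝ)/q) * lam^(i+1)) ∧
      (∀ i, lo ≤ d i ∧ d i ≤ hi) ∧
      (∃ b : ℕ → Bool, ∀ i, DgZ p q b i = d i) := by
    intro n
    obtain ⟨sx, hsx0, hsx⟩ := hmx n
    obtain ⟨sw, hsw0, hsw⟩ := hmw n
    refine ⟨fun i => mx n i - mw n i, ?_, ?_, ?_⟩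
    · have hsumx : Summable (fun i : ℕ => ((mx n i : ℝ)/q) * lam^(i+1)) := by
        apply summable_term q lam hl0 hl1 _ (p:ℝ)
        intro i
        have h2 := (hsx i).2
        simp only [UpAlph, Set.mem_Icc] at h2
        rw [abs_le]
        have h21 : ((p:ℝ) - q) ≤ (mx n i : ℝ) := by exact_mod_cast h2.1
        have h22 : (mx n i : ℝ) ≤ (p:ℝ) - 1 := by exact_mod_cast h2.2
        have hpq' : (q:ℝ) ≤ (p:ℝ) := by exact_mod_cast hpq.le
        constructor <;> linarith
      have hsumw : Summable (fun i : ℕ => ((mw n i : ℝ)/q) * lam^(i+1)) := by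
        apply summable_term q lam hl0 hl1 _ (p:ℝ)
        intro i
        have h2 := (hsw i).2
        simp only [LowAlph, Set.mem_Icc] at h2
        rw [abs_le]
        have h21 : (0:ℝ) ≤ (mw n i : ℝ) := by exact_mod_cast h2.1
        have h22 : (mw n i : ℝ) ≤ (q:ℝ) - 1 := by exact_mod_cast h2.2
        have hpq' : (q:ℝ) ≤ (p:ℝ) := by exact_mod_cast hpq.le
        constructor <;> linarith
      have e1 : rho p q (mx n) = ∑' i : ℕ, ((mx n i : ℝ)/q) * lam^(i+1) := by
        simp only [rho, hlam]
      have e2 : rho p q (mw n) = ∑' i : ℕ, ((mw n i : ℝ)/q) * lam^(i+1) := by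
        simp only [rho, hlam]
      rw [e1, e2, ← Summable.tsum_sub hsumx hsumw]
      apply tsum_congr
      intro i
      push_cast
      ring
    · intro i
      have h2 := (hsx i).2
      have h3 := (hsw i).2
      simp only [UpAlph, LowAlph, Set.mem_Icc] at h2 h3
      rw [hlo, hhi]
      show (p:ℤ) - 2*q + 1 ≤ mx n i - mw n i ∧ mx n i - mw n i ≤ (p:ℤ) - 1
      omega
    · have hstep : ∀ k, (q:ℤ) * ((fun k => (sx k : ℤ) - sw k) (k+1)) =
          (p:ℤ) * ((fun k => (sx k : ℤ) - sw k) k) + (fun i => mx n i - mw n i) k ∧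
          (fun i => mx n i - mw n i) k ∈ Dalph p q := by
        intro k
        show (q:ℤ) * ((sx (k+1) : ℤ) - sw (k+1)) = (p:ℤ) * ((sx k : ℤ) - sw k)
            + (mx n k - mw n k) ∧ (mx n k - mw n k) ∈ Dalph p q
        have h1 := (hsx k).1
        have h2 := (hsw k).1
        have h3 := (hsx k).2
        have h4 := (hsw k).2
        simp only [UpAlph, LowAlph, Dalph, Set.mem_Icc] at h3 h4 ⊢
        constructor
        · linarith
        · omega
      obtain ⟨b, hb⟩ := encode p q hq0 (fun i => mx n i - mw n i)
        (fun k => (sx k : ℤ) - sw k) (by simp [hsx0, hsw0]) hstep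
      exact ⟨b, fun i => (hb i).2⟩
  have hilo : (0:ℤ) ≤ hi - lo := by rw [hlo, hhi]; omega
  set Cst : ℝ := (((hi - lo : ℤ)):ℝ)/q * lam * (1-lam)⁻¹ with hCst
  have hCst0 : 0 ≤ Cst := by
    rw [hCst]
    have h1 : (0:ℝ) ≤ (((hi - lo : ℤ)):ℝ) := by exact_mod_cast hilo
    have h2 : (0:ℝ) ≤ (1-lam)⁻¹ := by
      apply inv_nonneg.2; linarith
    positivity
  -- the key covering estimate
  have key : ∀ k : ℕ, volume (closure S) ≤ ENNReal.ofReal (Cst * (2*lam)^k) := by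
    intro k
    set eb : (Fin k → Bool) → ℕ → Bool :=
      fun v i => if h : i < k then v ⟨i, h⟩ else false with heb
    set Φ : (Fin k → Bool) → ℝ :=
      fun v => ∑ i ∈ Finset.range k, ((DgZ p q (eb v) i : ℝ)/q) * lam^(i+1) with hPhi
    set Ak : ℝ := ((lo:ℝ)/q) * lam^(k+1) * (1-lam)⁻¹ with hAk
    set Bk : ℝ := ((hi:ℝ)/q) * lam^(k+1) * (1-lam)⁻¹ with hBk
    have hBA : Bk - Ak = Cst * lam^k := by
      rw [hBk, hAk, hCst]
      push_cast
      ring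
    set U : Set ℝ := ⋃ v : Fin k → Bool, Set.Icc (Φ v + Ak) (Φ v + Bk) with hU
    have hclosed : IsClosed U := isClosed_iUnion_of_finite (fun v => isClosed_Icc)
    have hsub : S ⊆ U := by
      rintro x ⟨n, hxn⟩
      obtain ⟨d, hsum, hdbb, b, hb⟩ := branch n
      have hsumm : Summable (fun i : ℕ => ((d i : ℝ)/q) * lam^(i+1)) := by
        apply summable_term q lam hl0 hl1 _ (p:ℝ)
        intro i
        obtain ⟨h1, h2⟩ := hdbb i
        rw [abs_le]
        have h3 : (-(p:ℤ)) ≤ d i := by omega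
        have h4 : d i ≤ (p:ℤ) := by omega
        constructor
        · exact_mod_cast h3
        · exact_mod_cast h4
      refine Set.mem_iUnion.2 ⟨fun i => b i, ?_⟩
      have hΦeq : Φ (fun i => b i) = ∑ i ∈ Finset.range k,
          ((d i : ℝ)/q) * lam^(i+1) := by
        rw [hPhi]
        apply Finset.sum_congr rfl
        intro i hi'
        have hik := Finset.mem_range.1 hi'
        have hD : DgZ p q (eb fun i : Fin k => b i) i = d i := by
          rw [DgZ_congr p q _ b i ?_, hb i]
          intro j hj
          rw [heb]
          simp only
          rw [dif_pos (lt_of_le_of_lt hj hik)]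
        rw [hD]
      have htail := Summable.sum_add_tsum_nat_add (f := fun i : ℕ => ((d i : ℝ)/q) * lam^(i+1)) k hsumm
      have hsummk : Summable (fun i : ℕ => ((d (i+k) : ℝ)/q) * lam^((i+k)+1)) :=
        (summable_nat_add_iff k).2 hsumm
      have hlow : Ak ≤ ∑' i : ℕ, ((d (i+k) : ℝ)/q) * lam^((i+k)+1) := by
        rw [hAk, ← tsum_tail ((lo:ℝ)/q) lam hl0 hl1 k]
        apply Summable.tsum_le_tsum ?_ (summable_tail ((lo:ℝ)/q) lam hl0 hl1 k) hsummk
        intro i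
        have h1 : (lo:ℝ) ≤ (d (i+k) : ℝ) := by exact_mod_cast (hdbb (i+k)).1
        gcongr
      have hhigh : (∑' i : ℕ, ((d (i+k) : ℝ)/q) * lam^((i+k)+1)) ≤ Bk := by
        rw [hBk, ← tsum_tail ((hi:ℝ)/q) lam hl0 hl1 k]
        apply Summable.tsum_le_tsum ?_ hsummk (summable_tail ((hi:ℝ)/q) lam hl0 hl1 k)
        intro i
        have h1 : (d (i+k) : ℝ) ≤ (hi:ℝ) := by exact_mod_cast (hdbb (i+k)).2
        gcongr
      have hx : x = Φ (fun i => b i) + ∑' i : ℕ, ((d (i+k) : ℝ)/q) * lam^((i+k)+1) := by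
        rw [hxn, hsum, hΦeq, ← htail]
      constructor
      · rw [hx]; linarith
      · rw [hx]; linarith
    calc volume (closure S) ≤ volume U := measure_mono (closure_minimal hsub hclosed)
      _ ≤ ∑' v : Fin k → Bool, volume (Set.Icc (Φ v + Ak) (Φ v + Bk)) := measure_iUnion_le _
      _ = ∑' _v : Fin k → Bool, ENNReal.ofReal (Cst * lam^k) := by
          apply tsum_congr
          intro v
          rw [Real.volume_Icc]
          congr 1
          linarith [hBA]
      _ = ENNReal.ofReal (Cst * (2*lam)^k) := by
          rw [tsum_fintype, Finset.sum_const, Finset.card_univ, nsmul_eq_mul]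
          rw [show Cst * (2*lam)^k = (2:ℝ)^k * (Cst * lam^k) by ring,
            ENNReal.ofReal_mul (by positivity : (0:ℝ) ≤ (2:ℝ)^k),
            ENNReal.ofReal_pow (by norm_num : (0:ℝ) ≤ 2)]
          congr 1
          simp [Fintype.card_fun]
  have hlim : Tendsto (fun k : ℕ => ENNReal.ofReal (Cst * (2*lam)^k)) atTop (nhds 0) := by
    have h1 : Tendsto (fun k : ℕ => Cst * (2*lam)^k) atTop (nhds 0) := by
      have := (tendsto_pow_atTop_nhds_zero_of_lt_one h2l0 h2l1).const_mul Cst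
      simpa using this
    have := ENNReal.tendsto_ofReal h1
    simpa using this
  exact le_zero_iff.mp (ge_of_tendsto' hlim key)
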